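/- Let S be a smooth space-filling hypersurface of degree q+2 in P^n over F_q. Then every F_q-line is either tangent to S at exactly one F_q-point, or is completely contained in S (and hence tangent at all q+1 of its F_q-points). -/

import Mathlib

open MvPolynomial

/-- Evaluation over the algebraic closure of a polynomial with coefficients in `F`. -/
noncomputable def evalK (F : Type*) [Field F] {m : ℕ} (g : MvPolynomial (Fin m) F)
    (v : Fin m → AlgebraicClosure F) : AlgebraicClosure F :=
  eval v (map (algebraMap F (AlgebraicClosure F)) g)

/-- The point `s·a + t·b` of the algebraic-closure points of the `F_q`-line spanned by `a, b`. -/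
noncomputable def linePt (F : Type*) [Field F] {m : ℕ} (a b : Fin m → F)
    (s t : AlgebraicClosure F) : Fin m → AlgebraicClosure F :=
  fun i => s * algebraMap F (AlgebraicClosure F) (a i) +
    t * algebraMap F (AlgebraicClosure F) (b i)

/-- The hypersurface defined by `g` is smooth: the gradient does not vanish at any
nonzero point of the affine cone over the algebraic closure. -/
def SmoothHyp (F : Type*) [Field F] {m : ℕ} (g : MvPolynomial (Fin m) F) : Prop :=
  ∀ v : Fin m → AlgebraicClosure F, v ≠ 0 → evalK F g v = 0 →
    ∃ i, evalK F (pderiv i g) v ≠ 0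

/-- The hypersurface defined by `g` contains every `F_q`-rational point. -/
def SpaceFilling (F : Type*) [Field F] {m : ℕ} (g : MvPolynomial (Fin m) F) : Prop :=
  ∀ v : Fin m → F, eval v g = 0

/-- The `F_q`-line spanned by `a, b` is tangent to the hypersurface of `g`: at some point
of the line lying on the hypersurface, either the point is singular, or the whole line lies
in the tangent hyperplane there. -/
noncomputable def TangentLine (F : Type*) [Field F] {m : ℕ} (g : MvPolynomial (Fin m) F)
    (a b : Fin m → F) : Prop :=
  ∃ s t : AlgebraicClosure F, (s ≠ 0 ∨ t ≠ 0) ∧ evalK F g (linePt F a b s t) = 0 ∧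
    ((∀ i, evalK F (pderiv i g) (linePt F a b s t) = 0) ∨
      ((∑ j, evalK F (pderiv j g) (linePt F a b s t) *
          algebraMap F (AlgebraicClosure F) (a j)) = 0 ∧
       (∑ j, evalK F (pderiv j g) (linePt F a b s t) *
          algebraMap F (AlgebraicClosure F) (b j)) = 0))

/-- The `F_q`-line spanned by `a, b` is entirely contained in the hypersurface of `g`. -/
noncomputable def ContainedLine (F : Type*) [Field F] {m : ℕ} (g : MvPolynomial (Fin m) F)
    (a b : Fin m → F) : Prop :=
  ∀ s t : AlgebraicClosure F, evalK F g (linePt F a b s t) = 0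

/-- Tangency of the hypersurface of `g` to the line spanned by `a, b` at the `F_q`-point
with parameters `(s : t)`. -/
def FTangentAt (F : Type*) [Field F] {m : ℕ} (g : MvPolynomial (Fin m) F)
    (a b : Fin m → F) (s t : F) : Prop :=
  eval (s • a + t • b) g = 0 ∧
    ((∀ i, eval (s • a + t • b) (pderiv i g) = 0) ∨
      ((∑ j, eval (s • a + t • b) (pderiv j g) * a j) = 0 ∧
       (∑ j, eval (s • a + t • b) (pderiv j g) * b j) = 0))


namespace LineDichotomyAux


theorem deriv_aeval {R : Type*} [CommRing R] {m : ℕ} (σ : Fin m → Polynomial R)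
    (p : MvPolynomial (Fin m) R) :
    Polynomial.derivative (aeval σ p) =
      ∑ j, aeval σ (pderiv j p) * Polynomial.derivative (σ j) := by
  induction p using MvPolynomial.induction_on with
  | C a => simp
  | add p q hp hq =>
      simp only [map_add, hp, hq, ← Finset.sum_add_distrib, add_mul]
  | mul_X p i hp =>
      rw [map_mul, aeval_X, Polynomial.derivative_mul, hp, Finset.sum_mul]
      simp only [pderiv_mul, map_add, map_mul, aeval_X, add_mul, Finset.sum_add_distrib]
      refine congrArg₂ (· + ·) ?_ ?_
      · exact Finset.sum_congr rfl fun j _ => by ring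
      · rw [Finset.sum_eq_single i (fun j _ hji => by
            rw [pderiv_X_of_ne (Ne.symm hji), map_zero, mul_zero, zero_mul]) (by simp)]
        rw [pderiv_X_self, map_one, mul_one]

theorem degree_univ_sum {m : ℕ} (e : Fin m →₀ ℕ) : e.degree = ∑ j, e j :=
  Finset.sum_subset (Finset.subset_univ _)
    (fun _ _ hi => Finsupp.notMem_support_iff.mp hi)

theorem eval_smul_homog {R : Type*} [CommRing R] {m N : ℕ} {φ : MvPolynomial (Fin m) R}
    (h : φ.IsHomogeneous N) (c : R) (v : Fin m → R) :
    eval (c • v) φ = c ^ N * eval v φ := by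
  rw [eval_eq', eval_eq', Finset.mul_sum]
  refine Finset.sum_congr rfl fun d hd => ?_
  have hdeg : ∑ i, d i = N := by
    rw [← degree_univ_sum, Finsupp.degree_eq_weight_one]
    exact h (mem_support_iff.mp hd)
  calc coeff d φ * ∏ i, (c • v) i ^ d i
      = coeff d φ * ∏ i, (c ^ d i * v i ^ d i) := by
        simp [mul_pow]
    _ = (∏ i, c ^ d i) * (coeff d φ * ∏ i, v i ^ d i) := by
        rw [Finset.prod_mul_distrib]; ring
    _ = c ^ N * (coeff d φ * ∏ i, v i ^ d i) := by
        rw [Finset.prod_pow_eq_pow_sum, hdeg]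

theorem pderiv_homog {R : Type*} [CommRing R] {m N : ℕ} {φ : MvPolynomial (Fin m) R}
    (h : φ.IsHomogeneous (N + 1)) (i : Fin m) : (pderiv i φ).IsHomogeneous N := by
  rw [φ.as_sum, map_sum]
  apply MvPolynomial.IsHomogeneous.sum
  intro d hd
  rw [pderiv_monomial]
  by_cases hdi : d i = 0
  · rw [hdi]
    simpa using isHomogeneous_zero (σ := Fin m) (R := R) N
  · apply isHomogeneous_monomial
    have h1 : ∑ j, d j = N + 1 := by
      rw [← degree_univ_sum, Finsupp.degree_eq_weight_one]
      exact h (mem_support_iff.mp hd)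
    have hle : Finsupp.single i 1 ≤ d := by
      rw [Finsupp.single_le_iff]; omega
    have h2 : (d - Finsupp.single i 1) + Finsupp.single i 1 = d := tsub_add_cancel_of_le hle
    have e2 : ∑ j, (Finsupp.single i 1 : Fin m →₀ ℕ) j = 1 := by
      simp [Finsupp.single_apply]
    have e3 : ∑ j, ((d - Finsupp.single i 1 : Fin m →₀ ℕ) j
        + (Finsupp.single i 1 : Fin m →₀ ℕ) j) = ∑ j, d j :=
      Finset.sum_congr rfl fun j _ => by rw [← Finsupp.add_apply, h2]
    rw [Finset.sum_add_distrib, e2, h1] at e3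
    rw [degree_univ_sum]
    omega

theorem euler_homog {R : Type*} [CommRing R] {m N : ℕ} {φ : MvPolynomial (Fin m) R}
    (h : φ.IsHomogeneous N) :
    ∑ j, X j * pderiv j φ = N • φ := by
  have step : ∀ j : Fin m, X j * pderiv j φ
      = ∑ d ∈ φ.support, monomial d (coeff d φ * (d j : R)) := by
    intro j
    conv_lhs => rw [φ.as_sum]
    rw [map_sum, Finset.mul_sum]
    refine Finset.sum_congr rfl fun d hd => ?_
    rw [pderiv_monomial]
    by_cases hdj : d j = 0
    · simp [hdj]
    · have hle : Finsupp.single j 1 ≤ d := by rw [Finsupp.single_le_iff]; omega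
      rw [X, monomial_mul, one_mul, add_tsub_cancel_of_le hle]
  simp only [step]
  rw [Finset.sum_comm]
  conv_rhs => rw [φ.as_sum]
  rw [Finset.smul_sum]
  refine Finset.sum_congr rfl fun d hd => ?_
  have hdeg : ∑ j, d j = N := by
    rw [← degree_univ_sum, Finsupp.degree_eq_weight_one]
    exact h (mem_support_iff.mp hd)
  have hcast : ∑ j, (d j : R) = (N : R) := by
    rw [← Nat.cast_sum, hdeg]
  rw [← map_sum (monomial d), ← Finset.mul_sum, hcast, mul_comm, ← nsmul_eq_mul, map_nsmul]

variable {F : Type*} [Field F] {m : ℕ}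

theorem evalK_eq_aeval (g : MvPolynomial (Fin m) F) (v : Fin m → AlgebraicClosure F) :
    evalK F g v = aeval v g := by
  rw [evalK, aeval_def, eval₂_eq_eval_map]

theorem evalK_algebraMap (g : MvPolynomial (Fin m) F) (v : Fin m → F) :
    evalK F g (fun i => algebraMap F (AlgebraicClosure F) (v i))
      = algebraMap F (AlgebraicClosure F) (eval v g) := by
  rw [evalK_eq_aeval]
  have : aeval (fun i => algebraMap F (AlgebraicClosure F) (v i))
      = (Algebra.ofId F (AlgebraicClosure F)).comp
          (aeval (R := F) (S₁ := F) v) := by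
    apply algHom_ext
    intro i
    simp [Algebra.ofId_apply]
  rw [this]
  simp [Algebra.ofId_apply, aeval_def, eval₂_eq_eval_map, Algebra.algebraMap_self, map_id]

theorem eval_aeval_line (a b : Fin m → F) (x : F) (p : MvPolynomial (Fin m) F) :
    Polynomial.eval x
      (aeval (fun j => Polynomial.C (a j) * Polynomial.X + Polynomial.C (b j)) p)
      = eval (x • a + b) p := by
  have : (Polynomial.aeval x).comp
      (aeval (fun j => Polynomial.C (a j) * Polynomial.X + Polynomial.C (b j)) :
        MvPolynomial (Fin m) F →ₐ[F] Polynomial F)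
      = aeval (R := F) (S₁ := F) (x • a + b) := by
    apply algHom_ext
    intro i
    simp only [AlgHom.comp_apply, aeval_X, map_add, map_mul, Polynomial.aeval_C,
      Polynomial.aeval_X, Pi.add_apply, Pi.smul_apply, smul_eq_mul,
      Algebra.algebraMap_self, RingHom.id_apply]
    ring
  have h2 := congrArg (fun Φ => Φ p) this
  simp only [AlgHom.comp_apply] at h2
  rw [← Polynomial.coe_aeval_eq_eval, h2, aeval_def, eval₂_eq_eval_map,
    Algebra.algebraMap_self, map_id]

theorem evalK_line (a b : Fin m → F) (y : AlgebraicClosure F) (p : MvPolynomial (Fin m) F) :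
    Polynomial.eval y (Polynomial.map (algebraMap F (AlgebraicClosure F))
      (aeval (fun j => Polynomial.C (a j) * Polynomial.X + Polynomial.C (b j)) p))
      = evalK F p (linePt F a b y 1) := by
  have : (Polynomial.aeval (R := F) y).comp
      (aeval (fun j => Polynomial.C (a j) * Polynomial.X + Polynomial.C (b j)) :
        MvPolynomial (Fin m) F →ₐ[F] Polynomial F)
      = aeval (linePt F a b y 1) := by
    apply algHom_ext
    intro i
    simp only [AlgHom.comp_apply, aeval_X, map_add, map_mul, Polynomial.aeval_C,
      Polynomial.aeval_X, linePt]
    ring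
  have h2 := congrArg (fun Φ => Φ p) this
  simp only [AlgHom.comp_apply] at h2
  rw [Polynomial.eval_map, ← Polynomial.aeval_def, h2, evalK_eq_aeval]

end LineDichotomyAux

/-- For a smooth space-filling hypersurface `S` of degree `q+2` in `ℙⁿ`
over `F_q`, every `F_q`-line is either tangent to `S` at exactly one `F_q`-point, or is
completely contained in `S` (and hence tangent at all of its `F_q`-points). -/
theorem lineDichotomy_deg_q_add_two (q n : ℕ) (F : Type*) [Field F] [Fintype F]
    (hq : Fintype.card F = q)
    (f : MvPolynomial (Fin (n + 1)) F) (hf0 : f ≠ 0) (hhom : f.IsHomogeneous (q + 2))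
    (hfill : SpaceFilling F f) (hsm : SmoothHyp F f) :
    ∀ a b : Fin (n + 1) → F, LinearIndependent F ![a, b] →
      ((∃ s t : F, (s ≠ 0 ∨ t ≠ 0) ∧ FTangentAt F f a b s t ∧
          ∀ s' t' : F, (s' ≠ 0 ∨ t' ≠ 0) → FTangentAt F f a b s' t' →
            ∃ c : F, c ≠ 0 ∧ s' = c * s ∧ t' = c * t) ∨
        (ContainedLine F f a b ∧
          ∀ s t : F, (s ≠ 0 ∨ t ≠ 0) → FTangentAt F f a b s t)) := by
  classical
  open LineDichotomyAux in
  intro a b hab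
  -- notation
  set K := AlgebraicClosure F with hK
  set ψ := algebraMap F K with hψdef
  have hmapinj : Function.Injective ψ := (algebraMap F K).injective
  have hq2 : 1 < q := hq ▸ Fintype.one_lt_card
  have hcast : (q : F) = 0 := by rw [← hq]; exact FiniteField.cast_card_eq_zero F
  have hpow : ∀ x : F, x ^ q = x := fun x => by rw [← hq]; exact FiniteField.pow_card x
  -- linear independence
  have hli : ∀ s t : F, s • a + t • b = 0 → s = 0 ∧ t = 0 := by
    intro s t hst
    have h0 : (∑ i, ![s, t] i • ![a, b] i) = 0 := by
      rw [Fin.sum_univ_two]; simpa using hst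
    have h2 := Fintype.linearIndependent_iff.mp hab ![s, t] h0
    exact ⟨h2 0, h2 1⟩
  have hv0 : ∀ s t : F, (s ≠ 0 ∨ t ≠ 0) → s • a + t • b ≠ 0 := by
    intro s t hst hv
    rcases hli s t hv with ⟨rfl, rfl⟩
    simp at hst
  -- the restriction of f to the two charts of the line
  obtain ⟨P, hP⟩ : ∃ P : Polynomial F,
      P = aeval (fun j => Polynomial.C (a j) * Polynomial.X + Polynomial.C (b j)) f :=
    ⟨_, rfl⟩
  obtain ⟨P2, hP2⟩ : ∃ P2 : Polynomial F,
      P2 = aeval (fun j => Polynomial.C (b j) * Polynomial.X + Polynomial.C (a j)) f :=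
    ⟨_, rfl⟩
  have hPdeg : P.natDegree ≤ q + 2 := by
    rw [hP]
    have := MvPolynomial.aeval_natDegree_le f hhom.totalDegree_le
      (fun j => Polynomial.C (a j) * Polynomial.X + Polynomial.C (b j))
      (fun i => Polynomial.natDegree_linear_le)
    simpa using this
  have hPeval : ∀ x : F, Polynomial.eval x P = 0 := fun x => by
    rw [hP, eval_aeval_line]; exact hfill _
  have hPder : ∀ x : F, Polynomial.eval x (Polynomial.derivative P)
      = ∑ j, eval (x • a + b) (pderiv j f) * a j := by
    intro x
    rw [hP, deriv_aeval, Polynomial.eval_finset_sum]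
    refine Finset.sum_congr rfl fun j _ => ?_
    rw [Polynomial.eval_mul, eval_aeval_line]
    congr 1
    simp
  have hP2der : ∀ x : F, Polynomial.eval x (Polynomial.derivative P2)
      = ∑ j, eval (x • b + a) (pderiv j f) * b j := by
    intro x
    rw [hP2, deriv_aeval, Polynomial.eval_finset_sum]
    refine Finset.sum_congr rfl fun j _ => ?_
    rw [Polynomial.eval_mul, eval_aeval_line]
    congr 1
    simp
  -- over the algebraic closure
  have hPKdeg : (P.map ψ).natDegree ≤ q + 2 :=
    le_trans Polynomial.natDegree_map_le hPdeg
  have hPKeval : ∀ y : K, Polynomial.eval y (P.map ψ) = evalK F f (linePt F a b y 1) := by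
    intro y; rw [hP]; exact evalK_line a b y f
  have hP2Keval : ∀ y : K, Polynomial.eval y (P2.map ψ) = evalK F f (linePt F b a y 1) := by
    intro y; rw [hP2]; exact evalK_line b a y f
  have hsmulK : ∀ (c : K) (w : Fin (n + 1) → K), evalK F f (c • w) = c ^ (q + 2) * evalK F f w := by
    intro c w
    simp only [evalK]
    exact eval_smul_homog (hhom.map ψ) c w
  have hlinesmul : ∀ y : K, y ≠ 0 → linePt F b a y 1 = y • linePt F a b y⁻¹ 1 := by
    intro y hy
    funext i
    simp only [linePt, Pi.smul_apply, smul_eq_mul]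
    field_simp
    ring
  -- the reflection identity between the two charts
  have hrefl : P2.map ψ = Polynomial.reflect (q + 2) (P.map ψ) := by
    apply Polynomial.eq_of_infinite_eval_eq
    have hinf : ({y : K | y ≠ 0}).Infinite := by
      have hfin : ({0} : Set K).Finite := Set.finite_singleton 0
      exact hfin.infinite_compl
    refine hinf.mono ?_
    intro y hy
    have hy : y ≠ 0 := hy
    haveI : Invertible (y⁻¹ : K) := invertibleOfNonzero (inv_ne_zero hy)
    have hre := Polynomial.eval₂_reflect_mul_pow (RingHom.id K) y⁻¹ (q + 2) (P.map ψ) hPKdeg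
    have hinv : (⅟(y⁻¹ : K)) = y := by rw [invOf_eq_inv, inv_inv]
    rw [hinv] at hre
    have hre2 : Polynomial.eval y (Polynomial.reflect (q + 2) (P.map ψ)) * (y⁻¹) ^ (q + 2)
        = Polynomial.eval y⁻¹ (P.map ψ) := hre
    show Polynomial.eval y (P2.map ψ) = Polynomial.eval y (Polynomial.reflect (q + 2) (P.map ψ))
    have hlhs : Polynomial.eval y (P2.map ψ)
        = y ^ (q + 2) * Polynomial.eval y⁻¹ (P.map ψ) := by
      rw [hP2Keval, hlinesmul y hy, hsmulK, hPKeval]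
    rw [hlhs, ← hre2]
    rw [mul_comm, mul_assoc, ← mul_pow, inv_mul_cancel₀ hy, one_pow, mul_one]
    try field_simp
    try ring
  have hcoeffrel : ∀ i, i ≤ q + 2 → P2.coeff i = P.coeff (q + 2 - i) := by
    intro i hi
    apply hmapinj
    have h1 : ψ (P2.coeff i) = (P2.map ψ).coeff i := (Polynomial.coeff_map ψ i).symm
    have h2 : ψ (P.coeff (q + 2 - i)) = (P.map ψ).coeff (q + 2 - i) :=
      (Polynomial.coeff_map ψ _).symm
    rw [h1, h2, hrefl, Polynomial.coeff_reflect, Polynomial.revAt_le hi]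
  have htop : P.coeff (q + 2) = 0 := by
    have h0 := hcoeffrel 0 (Nat.zero_le _)
    rw [Nat.sub_zero] at h0
    rw [← h0, Polynomial.coeff_zero_eq_eval_zero, hP2, eval_aeval_line]
    have : (0 : F) • b + a = a := by funext i; simp
    rw [this]
    exact hfill a
  have hdeg1 : P.natDegree ≤ q + 1 := by
    rw [Polynomial.natDegree_le_iff_coeff_eq_zero]
    intro N hN
    by_cases hN2 : N = q + 2
    · rw [hN2]; exact htop
    · exact Polynomial.coeff_eq_zero_of_natDegree_lt (lt_of_le_of_lt hPdeg (by omega))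
  -- divide by X^q - X
  obtain ⟨D, hD⟩ : ∃ D : Polynomial F, D = Polynomial.X ^ q - Polynomial.X := ⟨_, rfl⟩
  have hmonic : D.Monic := by
    rw [hD]
    exact Polynomial.monic_X_pow_sub (by rw [Polynomial.degree_X]; exact_mod_cast hq2)
  have hDdeg : D.natDegree = q := hD ▸ FiniteField.X_pow_card_sub_X_natDegree_eq F hq2
  have hD0 : D ≠ 0 := hmonic.ne_zero
  have hDeval : ∀ x : F, Polynomial.eval x D = 0 := by
    intro x
    rw [hD]
    simp [hpow x]
  have hmod : P %ₘ D = 0 := by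
    by_cases hm0 : P %ₘ D = 0
    · exact hm0
    · apply Polynomial.eq_zero_of_natDegree_lt_card_of_eval_eq_zero' _ Finset.univ
      · intro x _
        have hdiv := Polynomial.modByMonic_add_div P D
        have := congrArg (Polynomial.eval x) hdiv
        simp only [Polynomial.eval_add, Polynomial.eval_mul, hDeval x, hPeval x,
          zero_mul] at this
        simpa using this
      · rw [Finset.card_univ, hq]
        have hlt := Polynomial.natDegree_lt_natDegree hm0
          (Polynomial.degree_modByMonic_lt P hmonic)
        rwa [hDdeg] at hlt
  obtain ⟨r, hr⟩ : ∃ r : Polynomial F, r = P /ₘ D := ⟨_, rfl⟩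
  have hPDr : P = D * r := by
    conv_lhs => rw [← Polynomial.modByMonic_add_div P D]
    rw [hmod, zero_add, hr]
  have hrdeg : r.natDegree ≤ 1 := by
    by_cases hr0 : r = 0
    · rw [hr0]; simp
    · have hmul := Polynomial.natDegree_mul hD0 hr0
      rw [← hPDr, hDdeg] at hmul
      omega
  obtain ⟨c1, hc1⟩ : ∃ c1 : F, c1 = r.coeff 1 := ⟨_, rfl⟩
  obtain ⟨c0, hc0⟩ : ∃ c0 : F, c0 = r.coeff 0 := ⟨_, rfl⟩
  have hrXC : r = Polynomial.C c1 * Polynomial.X + Polynomial.C c0 := by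
    rw [hc1, hc0]
    exact Polynomial.eq_X_add_C_of_natDegree_le_one hrdeg
  have hPexp : P = Polynomial.C c1 * Polynomial.X ^ (q + 1)
      + Polynomial.C c0 * Polynomial.X ^ q
      - Polynomial.C c1 * Polynomial.X ^ 2 - Polynomial.C c0 * Polynomial.X ^ 1 := by
    rw [hPDr, hrXC, hD]
    ring
  have hPcoeffq1 : P.coeff (q + 1) = c1 := by
    rw [hPexp]
    simp only [Polynomial.coeff_sub, Polynomial.coeff_add, Polynomial.coeff_C_mul,
      Polynomial.coeff_X_pow]
    simp [show ¬(q + 1 = q) by omega, show ¬(q + 1 = 2) by omega,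
      show ¬(q + 1 = 1) by omega]
    intro h; omega
  have hP2c1 : P2.coeff 1 = c1 := by
    have := hcoeffrel 1 (by omega)
    rw [this, show q + 2 - 1 = q + 1 by omega, hPcoeffq1]
  have hrderiv_eval : ∀ x : F,
      Polynomial.eval x (Polynomial.derivative P) = -(c1 * x + c0) := by
    intro x
    have hdD : Polynomial.eval x (Polynomial.derivative D) = -1 := by
      rw [hD, Polynomial.derivative_sub, Polynomial.derivative_X_pow, Polynomial.derivative_X]
      simp [hcast]
    rw [hPDr, Polynomial.derivative_mul, Polynomial.eval_add, Polynomial.eval_mul,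
      Polynomial.eval_mul, hDeval x, hdD, zero_mul, add_zero]
    have hrx : Polynomial.eval x r = c1 * x + c0 := by rw [hrXC]; simp
    rw [hrx]
    ring
  -- Euler's relation, evaluated
  have heuler : ∀ v : Fin (n + 1) → F, ∑ j, v j * eval v (pderiv j f) = 0 := by
    intro v
    have he := congrArg (eval v) (euler_homog hhom)
    rw [nsmul_eq_mul] at he
    simp only [map_sum, map_mul, eval_X, map_natCast] at he
    rw [he, hfill v, mul_zero]
  -- smoothness: rational points of S are not singular
  have hnsing : ∀ v : Fin (n + 1) → F, v ≠ 0 → ¬(∀ i, eval v (pderiv i f) = 0) := by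
    intro v hv hall
    have hvK : (fun i => ψ (v i)) ≠ 0 := by
      intro h0
      apply hv
      funext i
      have h1 : ψ (v i) = 0 := congrFun h0 i
      show v i = 0
      exact hmapinj (by rw [h1, map_zero])
    obtain ⟨i, hi⟩ := hsm _ hvK (by rw [evalK_algebraMap, hfill, map_zero])
    exact hi (by rw [evalK_algebraMap, hall i, map_zero])
  have htan : ∀ s t : F, (s ≠ 0 ∨ t ≠ 0) → (FTangentAt F f a b s t ↔
      ((∑ j, eval (s • a + t • b) (pderiv j f) * a j) = 0 ∧
       (∑ j, eval (s • a + t • b) (pderiv j f) * b j) = 0)) := by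
    intro s t hst
    constructor
    · rintro ⟨-, hc | hc⟩
      · exact absurd hc (hnsing _ (hv0 s t hst))
      · exact hc
    · intro hc
      exact ⟨hfill _, Or.inr hc⟩
  -- the key characterization of tangency
  have key : ∀ s t : F, (s ≠ 0 ∨ t ≠ 0) →
      (FTangentAt F f a b s t ↔ c1 * s + c0 * t = 0) := by
    intro s t hst
    rw [htan s t hst]
    have heu : s * (∑ j, eval (s • a + t • b) (pderiv j f) * a j)
        + t * (∑ j, eval (s • a + t • b) (pderiv j f) * b j) = 0 := by
      rw [Finset.mul_sum, Finset.mul_sum, ← Finset.sum_add_distrib, ← heuler (s • a + t • b)]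
      refine Finset.sum_congr rfl fun j _ => ?_
      simp only [Pi.add_apply, Pi.smul_apply, smul_eq_mul]
      ring
    by_cases ht : t = 0
    · subst ht
      have hs : s ≠ 0 := by tauto
      have hA : (∑ j, eval (s • a + (0 : F) • b) (pderiv j f) * a j) = 0 := by
        have : s * (∑ j, eval (s • a + (0 : F) • b) (pderiv j f) * a j) = 0 := by
          have := heu
          simpa using this
        exact (mul_eq_zero.mp this).resolve_left hs
      have hsa : s • a + (0 : F) • b = s • a := by funext i; simp
      have hBval : (∑ j, eval (s • a + (0 : F) • b) (pderiv j f) * b j)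
          = s ^ (q + 1) * c1 := by
        have hterm : ∀ j, eval (s • a + (0 : F) • b) (pderiv j f) * b j
            = s ^ (q + 1) * (eval a (pderiv j f) * b j) := by
          intro j
          rw [hsa, eval_smul_homog (pderiv_homog hhom j)]
          ring
        rw [Finset.sum_congr rfl fun j _ => hterm j, ← Finset.mul_sum]
        congr 1
        have h0ba : (0 : F) • b + a = a := by funext i; simp
        have := hP2der 0
        rw [h0ba] at this
        rw [← this, ← Polynomial.coeff_zero_eq_eval_zero, Polynomial.coeff_derivative, hP2c1]
        simp
      constructor
      · rintro ⟨-, hB⟩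
        rw [hBval] at hB
        have : c1 = 0 := (mul_eq_zero.mp hB).resolve_left (pow_ne_zero _ hs)
        rw [this]
        ring
      · intro hu
        have hc1z : c1 = 0 := by
          have : c1 * s = 0 := by simpa using hu
          exact (mul_eq_zero.mp this).resolve_right hs
        exact ⟨hA, by rw [hBval, hc1z, mul_zero]⟩
    · have hvx : s • a + t • b = t • ((s * t⁻¹) • a + b) := by
        funext i
        simp only [Pi.add_apply, Pi.smul_apply, smul_eq_mul]
        field_simp
      have hAval : (∑ j, eval (s • a + t • b) (pderiv j f) * a j)
          = -(t ^ q * (c1 * s + c0 * t)) := by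
        have hterm : ∀ j, eval (s • a + t • b) (pderiv j f) * a j
            = t ^ (q + 1) * (eval ((s * t⁻¹) • a + b) (pderiv j f) * a j) := by
          intro j
          rw [hvx, eval_smul_homog (pderiv_homog hhom j)]
          ring
        rw [Finset.sum_congr rfl fun j _ => hterm j, ← Finset.mul_sum, ← hPder,
          hrderiv_eval]
        field_simp
        ring
      constructor
      · rintro ⟨hA, -⟩
        rw [hAval] at hA
        have := neg_eq_zero.mp hA
        exact (mul_eq_zero.mp this).resolve_left (pow_ne_zero _ ht)
      · intro hu
        have hA : (∑ j, eval (s • a + t • b) (pderiv j f) * a j) = 0 := by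
          rw [hAval, hu, mul_zero, neg_zero]
        have hB : (∑ j, eval (s • a + t • b) (pderiv j f) * b j) = 0 := by
          have := heu
          rw [hA, mul_zero, zero_add] at this
          exact (mul_eq_zero.mp this).resolve_left ht
        exact ⟨hA, hB⟩
  -- the dichotomy
  by_cases hzero : P = 0
  · right
    have hr0 : r = 0 := by
      rcases mul_eq_zero.mp (hzero ▸ hPDr.symm) with h | h
      · exact absurd h hD0
      · exact h
    have hc1z : c1 = 0 := by rw [hc1, hr0]; simp
    have hc0z : c0 = 0 := by rw [hc0, hr0]; simp
    constructor
    · intro s t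
      by_cases ht : t = 0
      · subst ht
        have hline : linePt F a b s 0 = s • (fun i => ψ (a i)) := by
          funext i
          simp [linePt, hψdef]
          exact Or.inl rfl
        rw [hline, hsmulK, evalK_algebraMap, hfill a, map_zero, mul_zero]
      · have hline : linePt F a b s t = t • linePt F a b (s * t⁻¹) 1 := by
          funext i
          simp only [linePt, Pi.smul_apply, smul_eq_mul]
          field_simp
        rw [hline, hsmulK, ← hPKeval, hzero, Polynomial.map_zero, Polynomial.eval_zero,
          mul_zero]
    · intro s t hst
      exact (key s t hst).mpr (by rw [hc1z, hc0z]; ring)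
  · left
    have hr0 : r ≠ 0 := fun h0 => hzero (by rw [hPDr, h0, mul_zero])
    have hcc : c1 ≠ 0 ∨ c0 ≠ 0 := by
      by_contra hcon
      push_neg at hcon
      exact hr0 (by rw [hrXC, hcon.1, hcon.2]; simp)
    refine ⟨c0, -c1, ?_, (key _ _ ?_).mpr (by ring), ?_⟩
    · rcases hcc with h | h
      · exact Or.inr (neg_ne_zero.mpr h)
      · exact Or.inl h
    · rcases hcc with h | h
      · exact Or.inr (neg_ne_zero.mpr h)
      · exact Or.inl h
    · intro s' t' hst' htan'
      have hu := (key s' t' hst').mp htan'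
      by_cases hc0z : c0 = 0
      · have hc1nz : c1 ≠ 0 := by tauto
        have hs' : s' = 0 := by
          have : c1 * s' = 0 := by rw [hc0z] at hu; simpa using hu
          exact (mul_eq_zero.mp this).resolve_left hc1nz
        have ht' : t' ≠ 0 := by
          rcases hst' with h | h
          · exact absurd hs' h
          · exact h
        refine ⟨t' * (-c1)⁻¹, ?_, ?_, ?_⟩
        · exact mul_ne_zero ht' (inv_ne_zero (neg_ne_zero.mpr hc1nz))
        · rw [hc0z, mul_zero, hs']
        · field_simp
      · have hs' : s' ≠ 0 := by
          intro h0
          have : c0 * t' = 0 := by rw [h0] at hu; simpa using hu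
          have ht0 : t' = 0 := (mul_eq_zero.mp this).resolve_left hc0z
          rcases hst' with h | h
          · exact h h0
          · exact h ht0
        refine ⟨s' * c0⁻¹, mul_ne_zero hs' (inv_ne_zero hc0z), ?_, ?_⟩
        · field_simp
        · field_simp
          linear_combination hu
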